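/- For every positive integer a, there exists a poset P of height at most 2 with sign imbalance si(P) = a. (Existence version of Corollary 1.4, without the size bound.) -/

import Mathlib

/-- A linear extension of a finite poset `α` (with `n = |α|`) is an order-preserving
bijection `α ≃ Fin n`. -/
def IsLinearExtension {α : Type*} [PartialOrder α] {n : ℕ} (ℓ : α ≃ Fin n) : Prop :=
  ∀ x y : α, x ≤ y → ℓ x ≤ ℓ y

open scoped Classical in
/-- The signed sum of linear extensions of `α` with respect to a labeling `f`:
`Σ_{ℓ ∈ LE(α)} sgn(ℓ ∘ f⁻¹)`.  The sign imbalance is its absolute value. -/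
noncomputable def signedSum {α : Type*} [Fintype α] [PartialOrder α] {n : ℕ}
    (f : α ≃ Fin n) : ℤ :=
  ∑ ℓ : α ≃ Fin n,
    if IsLinearExtension ℓ then ((Equiv.Perm.sign (f.symm.trans ℓ) : ℤˣ) : ℤ) else 0

/-- `α` is a poset of height at most 2 whose sign imbalance equals `a`. -/
def IsHeight2WithSignImbalance (a : ℕ) (α : Type) [Fintype α] [PartialOrder α] : Prop :=
  (¬ ∃ x y z : α, x < y ∧ y < z) ∧
    ∀ f : α ≃ Fin (Fintype.card α), (signedSum f).natAbs = a

/-! ### Auxiliary construction: a 2-chain disjoint from a staircase bipartite poset. -/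

namespace SignImb

/-- The strict relation on codes `0..2m+1`: bottoms are even, tops odd;
staircase condition `x/2 ≤ y/2` among pairs `< m`, and pair `m` (`2m < 2m+1`)
is a separate 2-chain. -/
def ltP (m x y : ℕ) : Prop :=
  x % 2 = 0 ∧ y % 2 = 1 ∧ x / 2 ≤ y / 2 ∧ (y / 2 = m → x / 2 = m)

/-- The underlying type: `Fin (2m+2)` as a type synonym (to carry a custom order). -/
def Pos (m : ℕ) : Type := Fin (2*m+2)

variable {m : ℕ}

instance : Fintype (Pos m) := inferInstanceAs (Fintype (Fin _))

/-- value of an element -/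
def pv (x : Pos m) : ℕ := (show Fin _ from x).val

def pmk (m j : ℕ) (h : j < 2*m+2) : Pos m := (⟨j, h⟩ : Fin _)

@[simp] lemma pv_pmk (m j : ℕ) (h : j < 2*m+2) : pv (pmk m j h) = j := rfl

lemma pv_lt (x : Pos m) : pv x < 2*m+2 := (show Fin _ from x).isLt

lemma pv_inj {x y : Pos m} (h : pv x = pv y) : x = y := Fin.ext h

instance instPOPos : PartialOrder (Pos m) where
  le x y := x = y ∨ ltP m (pv x) (pv y)
  le_refl x := Or.inl rfl
  le_trans x y z hxy hyz := by
    rcases hxy with rfl | ⟨he, ho, hd, hi⟩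
    · exact hyz
    rcases hyz with rfl | ⟨he', ho', hd', hi'⟩
    · exact Or.inr ⟨he, ho, hd, hi⟩
    · omega
  le_antisymm x y hxy hyx := by
    rcases hxy with rfl | ⟨he, ho, hd, hi⟩
    · rfl
    rcases hyx with rfl | ⟨he', ho', hd', hi'⟩
    · rfl
    · omega

lemma le_iff' {x y : Pos m} : x ≤ y ↔ x = y ∨ ltP m (pv x) (pv y) := Iff.rfl

lemma ltP_ne {x y : Pos m} (h : ltP m (pv x) (pv y)) : x ≠ y := by
  intro h'; subst h'
  obtain ⟨he, ho, -, -⟩ := h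
  omega

lemma lt_iff' {x y : Pos m} : x < y ↔ ltP m (pv x) (pv y) := by
  constructor
  · intro h
    rcases (le_of_lt h : x ≤ y) with h' | h'
    · exact absurd h' (ne_of_lt h)
    · exact h'
  · intro h
    exact lt_of_le_of_ne (Or.inr h) (ltP_ne h)

lemma height2 : ¬ ∃ x y z : Pos m, x < y ∧ y < z := by
  rintro ⟨x, y, z, hxy, hyz⟩
  rw [lt_iff'] at hxy hyz
  obtain ⟨-, h1, -, -⟩ := hxy
  obtain ⟨h2, -, -, -⟩ := hyz
  omega

/-- Strict monotonicity of linear extensions on strict pairs. -/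
lemma ext_strict {n : ℕ} {ℓ : Pos m ≃ Fin n} (hℓ : IsLinearExtension ℓ)
    {x y : Pos m} (h : ltP m (pv x) (pv y)) : (ℓ x).val < (ℓ y).val := by
  have h1 : ℓ x ≤ ℓ y := hℓ x y (Or.inr h)
  have h2 : ℓ x ≠ ℓ y := fun he => ltP_ne h (ℓ.injective he)
  have h3 : (ℓ x).val ≠ (ℓ y).val := fun he => h2 (Fin.ext he)
  exact lt_of_le_of_ne h1 h3

/-! ### The canonical matched extensions `L k` -/

/-- Forward map: block `k` of positions receives the chain pair `(2m, 2m+1)`. -/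
def F (m k x : ℕ) : ℕ :=
  if x / 2 < k then x else if x < 2*m then x + 2 else x - 2*m + 2*k

/-- Inverse map. -/
def G (m k p : ℕ) : ℕ :=
  if p / 2 < k then p else if p / 2 = k then p - 2*k + 2*m else p - 2

lemma F_lt (k : ℕ) (hk : k ≤ m) {x : ℕ} (hx : x < 2*m+2) : F m k x < 2*m+2 := by
  unfold F; split_ifs <;> omega

lemma G_lt (k : ℕ) (hk : k ≤ m) {p : ℕ} (hp : p < 2*m+2) : G m k p < 2*m+2 := by
  unfold G; split_ifs <;> omega

lemma G_F (k : ℕ) (hk : k ≤ m) {x : ℕ} (hx : x < 2*m+2) : G m k (F m k x) = x := by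
  unfold F G; split_ifs <;> omega

lemma F_G (k : ℕ) (hk : k ≤ m) {p : ℕ} (hp : p < 2*m+2) : F m k (G m k p) = p := by
  unfold F G; split_ifs <;> omega

/-- The canonical matched extension with the chain block in position `k` (for `k ≤ m`),
as a permutation of `Fin (2m+2)`. -/
def L (m k : ℕ) (hk : k ≤ m) : Equiv.Perm (Fin (2*m+2)) where
  toFun x := ⟨F m k x.val, F_lt k hk x.isLt⟩
  invFun p := ⟨G m k p.val, G_lt k hk p.isLt⟩
  left_inv x := Fin.ext (G_F k hk x.isLt)
  right_inv p := Fin.ext (F_G k hk p.isLt)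

@[simp] lemma L_apply (k : ℕ) (hk : k ≤ m) (x : Fin (2*m+2)) :
    (L m k hk x).val = F m k x.val := rfl

@[simp] lemma L_symm_apply (k : ℕ) (hk : k ≤ m) (p : Fin (2*m+2)) :
    ((L m k hk).symm p).val = G m k p.val := rfl

lemma L_top (k : ℕ) (hk : k ≤ m) : (L m k hk ⟨2*m, by omega⟩).val = 2*k := by
  show F m k (2*m) = 2*k
  unfold F; split_ifs <;> omega

lemma L_last : L m m le_rfl = Equiv.refl _ := by
  apply Equiv.ext
  intro x
  apply Fin.ext
  have := x.isLt
  simp [F]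
  split_ifs <;> omega

lemma L_step (k : ℕ) (hk : k + 1 ≤ m) :
    L m k (by omega) =
      (L m (k+1) hk).trans
        ((Equiv.swap (⟨2*k, by omega⟩ : Fin (2*m+2)) ⟨2*k+2, by omega⟩).trans
          (Equiv.swap (⟨2*k+1, by omega⟩ : Fin (2*m+2)) ⟨2*k+3, by omega⟩)) := by
  apply Equiv.ext
  intro x
  apply Fin.ext
  have hx := x.isLt
  simp only [Equiv.trans_apply]
  rw [Equiv.swap_apply_def, Equiv.swap_apply_def]
  split_ifs with h1 h2 h3 h4 h5 h6 <;>
    simp only [Fin.ext_iff, L_apply, Fin.val_mk] at * <;>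
    · simp only [F] at *
      split_ifs at * <;> omega

lemma sign_L (k : ℕ) (hk : k ≤ m) : Equiv.Perm.sign (L m k hk) = 1 := by
  obtain ⟨d, hd⟩ : ∃ d, k + d = m := ⟨m - k, by omega⟩
  induction d generalizing k with
  | zero =>
      obtain rfl : k = m := by omega
      rw [L_last]; simp
  | succ d ih =>
      have hk1 : k + 1 ≤ m := by omega
      rw [L_step k hk1]
      have h1 : ((⟨2*k, by omega⟩ : Fin (2*m+2)) : Fin (2*m+2)) ≠ ⟨2*k+2, by omega⟩ := by
        simp [Fin.ext_iff]
      have h2 : ((⟨2*k+1, by omega⟩ : Fin (2*m+2)) : Fin (2*m+2)) ≠ ⟨2*k+3, by omega⟩ := by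
        simp [Fin.ext_iff]
      have := ih (k+1) hk1 (by omega)
      simp [Equiv.Perm.sign_trans, this, Equiv.Perm.sign_swap, h1, h2]


/-- `L k` as an equivalence from the poset. -/
def LL (m k : ℕ) (hk : k ≤ m) : Pos m ≃ Fin (2*m+2) := L m k hk

@[simp] lemma LL_apply (k : ℕ) (hk : k ≤ m) (x : Pos m) :
    ((LL m k hk) x).val = F m k (pv x) := rfl

@[simp] lemma LL_symm_apply (k : ℕ) (hk : k ≤ m) (p : Fin (2*m+2)) :
    pv ((LL m k hk).symm p) = G m k p.val := rfl

lemma LL_ext (k : ℕ) (hk : k ≤ m) : IsLinearExtension (LL m k hk) := by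
  intro x y hxy
  rcases hxy with rfl | ⟨he, ho, hd, hi⟩
  · exact le_refl _
  · rw [Fin.le_def]
    have hx := pv_lt x
    have hy := pv_lt y
    simp only [LL_apply]
    revert hi
    unfold F
    split_ifs <;> omega

open scoped Classical

/-- An extension is matched if each pair of positions `(2i, 2i+1)` is occupied by a
strictly related pair. -/
def Matched (ℓ : Pos m ≃ Fin (2*m+2)) : Prop :=
  ∀ i : ℕ, (h : i ≤ m) →
    ltP m (pv (ℓ.symm ⟨2*i, by omega⟩)) (pv (ℓ.symm ⟨2*i+1, by omega⟩))

lemma LL_matched (k : ℕ) (hk : k ≤ m) : Matched (LL m k hk) := by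
  intro i hi
  simp only [LL_symm_apply, Fin.val_mk]
  unfold G ltP
  split_ifs <;> omega

/-- The set of unmatched pair indices. -/
noncomputable def badSet (ℓ : Pos m ≃ Fin (2*m+2)) : Finset (Fin (m+1)) :=
  Finset.univ.filter (fun i =>
    ¬ ltP m (pv (ℓ.symm ⟨2*i.val, by have := i.isLt; omega⟩))
        (pv (ℓ.symm ⟨2*i.val+1, by have := i.isLt; omega⟩)))

lemma badSet_nonempty {ℓ : Pos m ≃ Fin (2*m+2)} (h : ¬ Matched ℓ) :
    (badSet ℓ).Nonempty := by
  rw [Matched] at h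
  push_neg at h
  obtain ⟨i, hi, hbad⟩ := h
  exact ⟨⟨i, by omega⟩, by simp [badSet]; exact fun hh => hbad hh⟩

/-- The first unmatched pair index. -/
noncomputable def badIdx (ℓ : Pos m ≃ Fin (2*m+2)) (h : ¬ Matched ℓ) : ℕ :=
  ((badSet ℓ).min' (badSet_nonempty h)).val

lemma badIdx_le (ℓ : Pos m ≃ Fin (2*m+2)) (h : ¬ Matched ℓ) : badIdx ℓ h ≤ m := by
  have := ((badSet ℓ).min' (badSet_nonempty h)).isLt
  unfold badIdx; omega

lemma badIdx_bad (ℓ : Pos m ≃ Fin (2*m+2)) (h : ¬ Matched ℓ) :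
    ¬ ltP m (pv (ℓ.symm ⟨2*(badIdx ℓ h), by have := badIdx_le ℓ h; omega⟩))
        (pv (ℓ.symm ⟨2*(badIdx ℓ h)+1, by have := badIdx_le ℓ h; omega⟩)) := by
  have hmem := (badSet ℓ).min'_mem (badSet_nonempty h)
  simp only [badSet, Finset.mem_filter] at hmem
  exact hmem.2

lemma badIdx_min (ℓ : Pos m ≃ Fin (2*m+2)) (h : ¬ Matched ℓ) {j : Fin (m+1)}
    (hj : j ∈ badSet ℓ) : badIdx ℓ h ≤ j.val :=
  (badSet ℓ).min'_le j hj

/-- The sign-reversing involution: swap the contents of the first unmatched pair. -/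
noncomputable def invol (ℓ : Pos m ≃ Fin (2*m+2)) : Pos m ≃ Fin (2*m+2) :=
  if h : Matched ℓ then ℓ
  else ℓ.trans (Equiv.swap ⟨2*(badIdx ℓ h), by have := badIdx_le ℓ h; omega⟩
      ⟨2*(badIdx ℓ h)+1, by have := badIdx_le ℓ h; omega⟩)

/-- Swapping the contents of adjacent positions `2i, 2i+1` whose contents are not
related keeps a linear extension a linear extension. -/
lemma swap_ext {ℓ : Pos m ≃ Fin (2*m+2)} (hext : IsLinearExtension ℓ)
    (i : ℕ) (hi : i ≤ m)
    (hbad : ¬ ltP m (pv (ℓ.symm ⟨2*i, by omega⟩)) (pv (ℓ.symm ⟨2*i+1, by omega⟩))) :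
    IsLinearExtension (ℓ.trans (Equiv.swap ⟨2*i, by omega⟩ ⟨2*i+1, by omega⟩)) := by
  intro x y hxy
  rcases hxy with rfl | hlt
  · exact le_refl _
  · have hv : (ℓ x).val < (ℓ y).val := ext_strict hext hlt
    by_cases hcase : (ℓ x).val = 2*i ∧ (ℓ y).val = 2*i+1
    · exfalso
      apply hbad
      have hx : ℓ.symm ⟨2*i, by omega⟩ = x := by
        apply ℓ.injective; rw [Equiv.apply_symm_apply]; exact (Fin.ext hcase.1).symm
      have hy : ℓ.symm ⟨2*i+1, by omega⟩ = y := by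
        apply ℓ.injective; rw [Equiv.apply_symm_apply]; exact (Fin.ext hcase.2).symm
      rw [hx, hy]; exact hlt
    · rw [Fin.le_def]
      simp only [Equiv.trans_apply]
      rw [Equiv.swap_apply_def, Equiv.swap_apply_def]
      revert hcase
      split_ifs <;>
        · simp only [Fin.ext_iff, Fin.val_mk] at *
          omega

lemma invol_symm_pv {ℓ : Pos m ≃ Fin (2*m+2)} (h : ¬ Matched ℓ) (p : Fin (2*m+2)) :
    pv ((invol ℓ).symm p)
      = pv (ℓ.symm (Equiv.swap (⟨2*(badIdx ℓ h), by have := badIdx_le ℓ h; omega⟩ : Fin (2*m+2))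
          ⟨2*(badIdx ℓ h)+1, by have := badIdx_le ℓ h; omega⟩ p)) := by
  rw [invol, dif_neg h]
  simp [Equiv.symm_trans_apply]


lemma not_related_rev {ℓ : Pos m ≃ Fin (2*m+2)} (hext : IsLinearExtension ℓ)
    {p q : Fin (2*m+2)} (hpq : p.val < q.val) :
    ¬ ltP m (pv (ℓ.symm q)) (pv (ℓ.symm p)) := by
  intro hlt
  have := ext_strict hext hlt
  rw [Equiv.apply_symm_apply, Equiv.apply_symm_apply] at this
  omega

lemma invol_of_not_matched {ℓ : Pos m ≃ Fin (2*m+2)} (h : ¬ Matched ℓ) :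
    invol ℓ = ℓ.trans (Equiv.swap ⟨2*(badIdx ℓ h), by have := badIdx_le ℓ h; omega⟩
      ⟨2*(badIdx ℓ h)+1, by have := badIdx_le ℓ h; omega⟩) := dif_neg h

lemma badSet_trans_swap {ℓ : Pos m ≃ Fin (2*m+2)} (hext : IsLinearExtension ℓ)
    {b : ℕ} (hb : b ≤ m)
    (hbad : ¬ ltP m (pv (ℓ.symm ⟨2*b, by omega⟩)) (pv (ℓ.symm ⟨2*b+1, by omega⟩))) :
    badSet (ℓ.trans (Equiv.swap ⟨2*b, by omega⟩ ⟨2*b+1, by omega⟩)) = badSet ℓ := by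
  apply Finset.ext
  intro j
  simp only [badSet, Finset.mem_filter, Finset.mem_univ, true_and]
  simp only [Equiv.symm_trans_apply, Equiv.symm_swap]
  by_cases hjb : j.val = b
  · have h1 : (Equiv.swap (⟨2*b, by omega⟩ : Fin (2*m+2)) ⟨2*b+1, by omega⟩)
        ⟨2*j.val, by have := j.isLt; omega⟩ = ⟨2*b+1, by omega⟩ := by
      rw [show (⟨2*j.val, by have := j.isLt; omega⟩ : Fin (2*m+2)) = ⟨2*b, by omega⟩ from
        Fin.ext (by simp [hjb])]
      exact Equiv.swap_apply_left _ _
    have h2 : (Equiv.swap (⟨2*b, by omega⟩ : Fin (2*m+2)) ⟨2*b+1, by omega⟩)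
        ⟨2*j.val+1, by have := j.isLt; omega⟩ = ⟨2*b, by omega⟩ := by
      rw [show (⟨2*j.val+1, by have := j.isLt; omega⟩ : Fin (2*m+2)) = ⟨2*b+1, by omega⟩ from
        Fin.ext (by simp [hjb])]
      exact Equiv.swap_apply_right _ _
    rw [h1, h2]
    clear h1 h2
    constructor
    · intro _
      have e1 : (⟨2*j.val, by have := j.isLt; omega⟩ : Fin (2*m+2))
          = ⟨2*b, by omega⟩ := Fin.ext (by simp [hjb])
      have e2 : (⟨2*j.val+1, by have := j.isLt; omega⟩ : Fin (2*m+2))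
          = ⟨2*b+1, by omega⟩ := Fin.ext (by simp [hjb])
      rw [e1, e2]
      exact hbad
    · intro _
      exact not_related_rev hext (by simp)
  · have h1 : (Equiv.swap (⟨2*b, by omega⟩ : Fin (2*m+2)) ⟨2*b+1, by omega⟩)
        ⟨2*j.val, by have := j.isLt; omega⟩ = ⟨2*j.val, by have := j.isLt; omega⟩ := by
      apply Equiv.swap_apply_of_ne_of_ne <;> · simp [Fin.ext_iff]; omega
    have h2 : (Equiv.swap (⟨2*b, by omega⟩ : Fin (2*m+2)) ⟨2*b+1, by omega⟩)
        ⟨2*j.val+1, by have := j.isLt; omega⟩ = ⟨2*j.val+1, by have := j.isLt; omega⟩ := by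
      apply Equiv.swap_apply_of_ne_of_ne <;> · simp [Fin.ext_iff]; omega
    rw [h1, h2]

lemma badSet_invol {ℓ : Pos m ≃ Fin (2*m+2)} (hext : IsLinearExtension ℓ)
    (h : ¬ Matched ℓ) : badSet (invol ℓ) = badSet ℓ := by
  rw [invol_of_not_matched h]
  exact badSet_trans_swap hext (badIdx_le ℓ h) (badIdx_bad ℓ h)

lemma mem_badSet_of_not_matched {ℓ : Pos m ≃ Fin (2*m+2)} (h : ¬ Matched ℓ) :
    (⟨badIdx ℓ h, by have := badIdx_le ℓ h; omega⟩ : Fin (m+1)) ∈ badSet ℓ := by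
  simp only [badSet, Finset.mem_filter, Finset.mem_univ, true_and]
  exact badIdx_bad ℓ h

lemma not_matched_of_mem {ℓ : Pos m ≃ Fin (2*m+2)} {j : Fin (m+1)}
    (hj : j ∈ badSet ℓ) : ¬ Matched ℓ := by
  simp only [badSet, Finset.mem_filter, Finset.mem_univ, true_and] at hj
  intro hM
  exact hj (hM j.val (by have := j.isLt; omega))

lemma not_matched_invol {ℓ : Pos m ≃ Fin (2*m+2)} (hext : IsLinearExtension ℓ)
    (h : ¬ Matched ℓ) : ¬ Matched (invol ℓ) := by
  apply not_matched_of_mem (j := ⟨badIdx ℓ h, by have := badIdx_le ℓ h; omega⟩)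
  rw [badSet_invol hext h]
  exact mem_badSet_of_not_matched h

lemma invol_ext {ℓ : Pos m ≃ Fin (2*m+2)} (hext : IsLinearExtension ℓ) :
    IsLinearExtension (invol ℓ) := by
  by_cases h : Matched ℓ
  · rw [show invol ℓ = ℓ from dif_pos h]; exact hext
  · rw [invol_of_not_matched h]
    exact swap_ext hext (badIdx ℓ h) (badIdx_le ℓ h) (badIdx_bad ℓ h)

lemma badIdx_invol {ℓ : Pos m ≃ Fin (2*m+2)} (hext : IsLinearExtension ℓ)
    (h : ¬ Matched ℓ) (h' : ¬ Matched (invol ℓ)) :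
    badIdx (invol ℓ) h' = badIdx ℓ h := by
  unfold badIdx
  congr 1
  simp only [badSet_invol hext h]

lemma invol_invol {ℓ : Pos m ≃ Fin (2*m+2)} (hext : IsLinearExtension ℓ)
    (h : ¬ Matched ℓ) : invol (invol ℓ) = ℓ := by
  have h' := not_matched_invol hext h
  rw [invol_of_not_matched h']
  have hbb := badIdx_invol hext h h'
  simp only [hbb]
  apply Equiv.ext
  intro x
  simp only [Equiv.trans_apply]
  rw [DFunLike.congr_fun (invol_of_not_matched h) x]
  simp only [Equiv.trans_apply]
  exact Equiv.swap_apply_self _ _ _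

lemma invol_ne {ℓ : Pos m ≃ Fin (2*m+2)} (h : ¬ Matched ℓ) : invol ℓ ≠ ℓ := by
  intro heq
  have hbm := badIdx_le ℓ h
  have h2 := DFunLike.congr_fun heq (ℓ.symm ⟨2*(badIdx ℓ h), by omega⟩)
  rw [invol_of_not_matched h] at h2
  simp only [Equiv.trans_apply, Equiv.apply_symm_apply] at h2
  rw [Equiv.swap_apply_left] at h2
  have := congrArg Fin.val h2
  simp at this

lemma sign_invol (f : Pos m ≃ Fin (2*m+2)) {ℓ : Pos m ≃ Fin (2*m+2)}
    (h : ¬ Matched ℓ) :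
    Equiv.Perm.sign (f.symm.trans (invol ℓ)) = - Equiv.Perm.sign (f.symm.trans ℓ) := by
  rw [invol_of_not_matched h, ← Equiv.trans_assoc]
  have hne : (⟨2*(badIdx ℓ h), by have := badIdx_le ℓ h; omega⟩ : Fin (2*m+2))
      ≠ ⟨2*(badIdx ℓ h)+1, by have := badIdx_le ℓ h; omega⟩ := by simp [Fin.ext_iff]
  have hmul : (f.symm.trans ℓ).trans (Equiv.swap (⟨2*(badIdx ℓ h), by have := badIdx_le ℓ h; omega⟩ : Fin (2*m+2)) ⟨2*(badIdx ℓ h)+1, by have := badIdx_le ℓ h; omega⟩)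
      = (Equiv.swap (⟨2*(badIdx ℓ h), by have := badIdx_le ℓ h; omega⟩ : Fin (2*m+2)) ⟨2*(badIdx ℓ h)+1, by have := badIdx_le ℓ h; omega⟩) * (f.symm.trans ℓ) := rfl
  rw [hmul, Equiv.Perm.sign_mul, Equiv.Perm.sign_swap hne]
  exact neg_one_mul _

lemma sum_unmatched_zero (f : Pos m ≃ Fin (2*m+2)) :
    ∑ ℓ ∈ (Finset.univ.filter (fun ℓ : Pos m ≃ Fin (2*m+2) => IsLinearExtension ℓ)).filter
        (fun ℓ => ¬ Matched ℓ),
      ((Equiv.Perm.sign (f.symm.trans ℓ) : ℤˣ) : ℤ) = 0 := by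
  apply Finset.sum_involution (fun ℓ _ => invol ℓ)
  · intro a ha
    simp only [Finset.mem_filter, Finset.mem_univ, true_and] at ha
    rw [sign_invol f ha.2]
    push_cast
    ring
  · intro a ha _
    simp only [Finset.mem_filter, Finset.mem_univ, true_and] at ha
    exact invol_ne ha.2
  · intro a ha
    simp only [Finset.mem_filter, Finset.mem_univ, true_and] at ha ⊢
    exact ⟨invol_ext ha.1, not_matched_invol ha.1 ha.2⟩
  · intro a ha
    simp only [Finset.mem_filter, Finset.mem_univ, true_and] at ha
    exact invol_invol ha.1 ha.2


/-! ### Classification of matched extensions -/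

def posE (m i : ℕ) : Fin (2*m+2) := ⟨min (2*i) (2*m), by omega⟩
def posO (m i : ℕ) : Fin (2*m+2) := ⟨min (2*i+1) (2*m+1), by omega⟩

lemma posE_val {i : ℕ} (hi : i ≤ m) : (posE m i).val = 2*i := by
  simp [posE]; omega

lemma posO_val {i : ℕ} (hi : i ≤ m) : (posO m i).val = 2*i+1 := by
  simp [posO]; omega

lemma matched_pair {ℓ : Pos m ≃ Fin (2*m+2)} (hM : Matched ℓ) {i : ℕ} (hi : i ≤ m) :
    ltP m (pv (ℓ.symm (posE m i))) (pv (ℓ.symm (posO m i))) := by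
  have h1 : posE m i = ⟨2*i, by omega⟩ := Fin.ext (by simp [posE]; omega)
  have h2 : posO m i = ⟨2*i+1, by omega⟩ := Fin.ext (by simp [posO]; omega)
  rw [h1, h2]
  exact hM i hi

lemma matched_classify {ℓ : Pos m ≃ Fin (2*m+2)} (hext : IsLinearExtension ℓ)
    (hM : Matched ℓ) : ∃ k : ℕ, ∃ hk : k ≤ m, ℓ = LL m k hk := by
  -- Step A : locate the position of the maximal chain element 2m+1.
  obtain ⟨kf, hkf⟩ : ∃ p : Fin (2*m+2), ℓ (pmk m (2*m+1) (by omega)) = p := ⟨_, rfl⟩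
  have hkfsymm : ℓ.symm kf = pmk m (2*m+1) (by omega) := by
    rw [← hkf, Equiv.symm_apply_apply]
  have hkodd : kf.val % 2 = 1 := by
    rcases Nat.even_or_odd kf.val with he | ho
    · exfalso
      obtain ⟨t, ht⟩ := he
      have hi : kf.val / 2 ≤ m := by have := kf.isLt; omega
      have hpair := matched_pair hM hi
      have heq : posE m (kf.val / 2) = kf := Fin.ext (by rw [posE_val hi]; omega)
      rw [heq, hkfsymm] at hpair
      have hv : pv (pmk m (2*m+1) (by omega)) = 2*m+1 := rfl
      rw [hv] at hpair
      obtain ⟨h1, -, -, -⟩ := hpair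
      omega
    · obtain ⟨t, ht⟩ := ho
      omega
  obtain ⟨k, hkdef⟩ : ∃ k, k = kf.val / 2 := ⟨_, rfl⟩
  have hk : k ≤ m := by have := kf.isLt; omega
  have hkfeq : kf = posO m k := Fin.ext (by rw [posO_val hk]; omega)
  have hgO : pv (ℓ.symm (posO m k)) = 2*m+1 := by
    rw [← hkfeq, hkfsymm]; rfl
  have hgE : pv (ℓ.symm (posE m k)) = 2*m := by
    have hpair := matched_pair hM hk
    rw [hgO] at hpair
    obtain ⟨h1, -, -, h4⟩ := hpair
    have h5 := h4 (by omega)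
    have := pv_lt (ℓ.symm (posE m k))
    omega
  -- Step B : the matching on the staircase part is the identity matching.
  set s : Finset ℕ := (Finset.range (m+1)).erase k with hs
  set O : ℕ → ℕ := fun i => pv (ℓ.symm (posO m i)) / 2 with hO
  set E : ℕ → ℕ := fun i => pv (ℓ.symm (posE m i)) / 2 with hE
  have hmem : ∀ i ∈ s, i ≤ m ∧ i ≠ k := by
    intro i hi
    rw [hs, Finset.mem_erase, Finset.mem_range] at hi
    omega
  have hOodd : ∀ i ∈ s, pv (ℓ.symm (posO m i)) = 2 * O i + 1 := by
    intro i hi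
    obtain ⟨hi1, -⟩ := hmem i hi
    have := (matched_pair hM hi1).2.1
    simp only [hO]
    omega
  have hEeven : ∀ i ∈ s, pv (ℓ.symm (posE m i)) = 2 * E i := by
    intro i hi
    obtain ⟨hi1, -⟩ := hmem i hi
    have := (matched_pair hM hi1).1
    simp only [hE]
    omega
  have hOlt : ∀ i ∈ s, O i < m := by
    intro i hi
    obtain ⟨hi1, hi2⟩ := hmem i hi
    by_contra hcon
    have hOle : O i ≤ m := by
      have := pv_lt (ℓ.symm (posO m i))
      simp only [hO]
      omega
    have hval : pv (ℓ.symm (posO m i)) = 2*m+1 := by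
      have := hOodd i hi; omega
    have heq : ℓ.symm (posO m i) = ℓ.symm (posO m k) := pv_inj (by rw [hval, hgO])
    have heq2 := congrArg Fin.val (ℓ.symm.injective heq)
    rw [posO_val hi1, posO_val hk] at heq2
    omega
  have hElt : ∀ i ∈ s, E i ≤ O i := by
    intro i hi
    obtain ⟨hi1, -⟩ := hmem i hi
    have := (matched_pair hM hi1).2.2.1
    simp only [hE, hO]
    omega
  have hOinj : ∀ i ∈ s, ∀ i' ∈ s, O i = O i' → i = i' := by
    intro i hi i' hi' heq
    obtain ⟨hi1, -⟩ := hmem i hi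
    obtain ⟨hi'1, -⟩ := hmem i' hi'
    have h1 := hOodd i hi
    have h2 := hOodd i' hi'
    have h3 : ℓ.symm (posO m i) = ℓ.symm (posO m i') := pv_inj (by omega)
    have h4 := congrArg Fin.val (ℓ.symm.injective h3)
    rw [posO_val hi1, posO_val hi'1] at h4
    omega
  have hEinj : ∀ i ∈ s, ∀ i' ∈ s, E i = E i' → i = i' := by
    intro i hi i' hi' heq
    obtain ⟨hi1, -⟩ := hmem i hi
    obtain ⟨hi'1, -⟩ := hmem i' hi'
    have h1 := hEeven i hi
    have h2 := hEeven i' hi'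
    have h3 : ℓ.symm (posE m i) = ℓ.symm (posE m i') := pv_inj (by omega)
    have h4 := congrArg Fin.val (ℓ.symm.injective h3)
    rw [posE_val hi1, posE_val hi'1] at h4
    omega
  have hscard : s.card = m := by
    rw [hs, Finset.card_erase_of_mem (by rw [Finset.mem_range]; omega), Finset.card_range]
    omega
  have himO : s.image O = Finset.range m := by
    apply Finset.eq_of_subset_of_card_le
    · intro x hx
      rw [Finset.mem_image] at hx
      obtain ⟨i, hi, rfl⟩ := hx
      rw [Finset.mem_range]
      exact hOlt i hi
    · rw [Finset.card_range, Finset.card_image_of_injOn hOinj, hscard]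
  have himE : s.image E = Finset.range m := by
    apply Finset.eq_of_subset_of_card_le
    · intro x hx
      rw [Finset.mem_image] at hx
      obtain ⟨i, hi, rfl⟩ := hx
      rw [Finset.mem_range]
      exact lt_of_le_of_lt (hElt i hi) (hOlt i hi)
    · rw [Finset.card_range, Finset.card_image_of_injOn hEinj, hscard]
  have hsum : ∑ i ∈ s, E i = ∑ i ∈ s, O i := by
    have h1 : ∑ i ∈ s, E i = ∑ x ∈ s.image E, x := (Finset.sum_image (f := fun x => x) hEinj).symm
    have h2 : ∑ i ∈ s, O i = ∑ x ∈ s.image O, x := (Finset.sum_image (f := fun x => x) hOinj).symm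
    rw [h1, h2, himE, himO]
  have hEO : ∀ i ∈ s, E i = O i := (Finset.sum_eq_sum_iff_of_le hElt).mp hsum
  -- Step C : strict monotonicity of the pair values.
  have hmono : ∀ i ∈ s, ∀ i' ∈ s, i < i' → O i < O i' := by
    intro i hi i' hi' hii
    obtain ⟨hi1, -⟩ := hmem i hi
    obtain ⟨hi'1, -⟩ := hmem i' hi'
    by_contra hcon
    have hne : O i' ≠ O i := fun h => by have := hOinj i' hi' i hi h; omega
    have hlt2 : O i' < O i := by omega
    have hE' := hEO i' hi'
    have hOm := hOlt i hi
    have hltp : ltP m (pv (ℓ.symm (posE m i'))) (pv (ℓ.symm (posO m i))) := by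
      rw [hEeven i' hi', hOodd i hi]
      exact ⟨by omega, by omega, by omega, by omega⟩
    have hcmp := ext_strict hext hltp
    rw [Equiv.apply_symm_apply, Equiv.apply_symm_apply] at hcmp
    rw [posE_val hi'1, posO_val hi1] at hcmp
    omega
  -- Step D : the pair value of position i is its rank.
  have hrank : ∀ i ∈ s, O i = i - (if k < i then 1 else 0) := by
    intro i hi
    obtain ⟨hi1, hi2⟩ := hmem i hi
    have hsetb : s.filter (fun x => x < i) = (Finset.range i).erase k := by
      ext x
      simp only [hs, Finset.mem_filter, Finset.mem_erase, Finset.mem_range]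
      omega
    have hcb : (s.filter (fun x => x < i)).card = i - (if k < i then 1 else 0) := by
      rw [hsetb]
      by_cases hki : k < i
      · rw [Finset.card_erase_of_mem (Finset.mem_range.mpr hki), Finset.card_range]
        simp only [if_pos hki]
      · rw [Finset.erase_eq_of_notMem (by rw [Finset.mem_range]; omega), Finset.card_range]
        simp only [if_neg hki]
        omega
    have hseta : s.filter (fun x => i < x) = (Finset.Ioo i (m+1)).erase k := by
      ext x
      simp only [hs, Finset.mem_filter, Finset.mem_erase, Finset.mem_range, Finset.mem_Ioo]
      omega
    have hca : (s.filter (fun x => i < x)).card = m - i - (if i < k then 1 else 0) := by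
      rw [hseta]
      by_cases hik : i < k
      · rw [Finset.card_erase_of_mem (Finset.mem_Ioo.mpr ⟨hik, by omega⟩), Nat.card_Ioo]
        simp only [if_pos hik]
        omega
      · rw [Finset.erase_eq_of_notMem (by rw [Finset.mem_Ioo]; omega), Nat.card_Ioo]
        simp only [if_neg hik]
        omega
    have hbelow : (s.filter (fun x => x < i)).card ≤ O i := by
      have hinj' : ∀ a ∈ s.filter (fun x => x < i), ∀ b ∈ s.filter (fun x => x < i),
          O a = O b → a = b := by
        intro a ha b hb
        exact hOinj a (Finset.mem_filter.mp ha).1 b (Finset.mem_filter.mp hb).1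
      have hsub : (s.filter (fun x => x < i)).image O ⊆ Finset.range (O i) := by
        intro x hx
        rw [Finset.mem_image] at hx
        obtain ⟨j, hj, rfl⟩ := hx
        rw [Finset.mem_filter] at hj
        rw [Finset.mem_range]
        exact hmono j hj.1 i hi hj.2
      calc (s.filter (fun x => x < i)).card
          = ((s.filter (fun x => x < i)).image O).card :=
            (Finset.card_image_of_injOn hinj').symm
        _ ≤ (Finset.range (O i)).card := Finset.card_le_card hsub
        _ = O i := Finset.card_range _
    have habove : (s.filter (fun x => i < x)).card + O i + 1 ≤ m := by
      have hinj' : ∀ a ∈ s.filter (fun x => i < x), ∀ b ∈ s.filter (fun x => i < x),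
          O a = O b → a = b := by
        intro a ha b hb
        exact hOinj a (Finset.mem_filter.mp ha).1 b (Finset.mem_filter.mp hb).1
      have hsub : (s.filter (fun x => i < x)).image O ⊆ Finset.Ioo (O i) m := by
        intro x hx
        rw [Finset.mem_image] at hx
        obtain ⟨j, hj, rfl⟩ := hx
        rw [Finset.mem_filter] at hj
        rw [Finset.mem_Ioo]
        exact ⟨hmono i hi j hj.1 hj.2, hOlt j hj.1⟩
      have hO1 := hOlt i hi
      have := calc (s.filter (fun x => i < x)).card
          = ((s.filter (fun x => i < x)).image O).card :=
            (Finset.card_image_of_injOn hinj').symm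
        _ ≤ (Finset.Ioo (O i) m).card := Finset.card_le_card hsub
        _ = m - (O i) - 1 := by rw [Nat.card_Ioo]
      omega
    rw [hcb] at hbelow
    rw [hca] at habove
    by_cases hik : i < k <;> by_cases hki : k < i <;> simp [hik, hki] at hbelow habove ⊢ <;> omega
  -- Step E : conclude that ℓ is the canonical matched extension.
  refine ⟨k, hk, ?_⟩
  have hvalsO : ∀ i ∈ s, pv (ℓ.symm (posO m i)) = 2*(i - (if k < i then 1 else 0)) + 1 := by
    intro i hi
    rw [hOodd i hi, hrank i hi]
  have hvalsE : ∀ i ∈ s, pv (ℓ.symm (posE m i)) = 2*(i - (if k < i then 1 else 0)) := by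
    intro i hi
    rw [hEeven i hi, hEO i hi, hrank i hi]
  have hsymm : ℓ.symm = (LL m k hk).symm := by
    apply Equiv.ext
    intro p
    apply pv_inj
    rw [LL_symm_apply]
    have hp := p.isLt
    rcases Nat.even_or_odd p.val with hpar | hpar
    · obtain ⟨t, ht⟩ := hpar
      obtain ⟨i, hi, hpe⟩ : ∃ i, i ≤ m ∧ p = posE m i :=
        ⟨p.val/2, by omega, Fin.ext (by rw [posE_val (by omega)]; omega)⟩
      rw [hpe, posE_val hi]
      by_cases hik : i = k
      · subst hik
        rw [hgE]
        unfold G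
        split_ifs <;> omega
      · have his : i ∈ s := by
          rw [hs, Finset.mem_erase, Finset.mem_range]
          exact ⟨hik, by omega⟩
        rw [hvalsE i his]
        unfold G
        split_ifs <;> omega
    · obtain ⟨t, ht⟩ := hpar
      obtain ⟨i, hi, hpe⟩ : ∃ i, i ≤ m ∧ p = posO m i :=
        ⟨p.val/2, by omega, Fin.ext (by rw [posO_val (by omega)]; omega)⟩
      rw [hpe, posO_val hi]
      by_cases hik : i = k
      · subst hik
        rw [hgO]
        unfold G
        split_ifs <;> omega
      · have his : i ∈ s := by
          rw [hs, Finset.mem_erase, Finset.mem_range]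
          exact ⟨hik, by omega⟩
        rw [hvalsO i his]
        unfold G
        split_ifs <;> omega
  have := congrArg Equiv.symm hsymm
  simpa using this

/-! ### Assembling the signed sum -/

/-- The canonical labeling. -/
def lab (m : ℕ) : Pos m ≃ Fin (2*m+2) := Equiv.refl (Fin (2*m+2))

lemma lab_trans_LL (k : ℕ) (hk : k ≤ m) :
    (lab m).symm.trans (LL m k hk) = L m k hk := by
  apply Equiv.ext
  intro x
  rfl

lemma sign_lab_LL (k : ℕ) (hk : k ≤ m) :
    Equiv.Perm.sign ((lab m).symm.trans (LL m k hk)) = 1 := by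
  rw [lab_trans_LL, sign_L]

/-- A total version of `LL`. -/
def LLt (m k : ℕ) : Pos m ≃ Fin (2*m+2) := LL m (min k m) (min_le_right k m)

lemma LL_congr {k k' : ℕ} (h : k = k') (hk : k ≤ m) (hk' : k' ≤ m) :
    LL m k hk = LL m k' hk' := by subst h; rfl

lemma LLt_eq {k : ℕ} (hk : k ≤ m) : LLt m k = LL m k hk :=
  LL_congr (min_eq_left hk) _ _

lemma F_top (k : ℕ) (hk : k ≤ m) : F m k (2*m) = 2*k := by
  unfold F; split_ifs <;> omega

lemma LLt_inj : ∀ k ∈ Finset.range (m+1), ∀ k' ∈ Finset.range (m+1),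
    LLt m k = LLt m k' → k = k' := by
  intro k hk k' hk' heq
  rw [Finset.mem_range] at hk hk'
  rw [LLt_eq (by omega : k ≤ m), LLt_eq (by omega : k' ≤ m)] at heq
  have h1 := congrArg Fin.val (DFunLike.congr_fun heq (pmk m (2*m) (by omega)))
  rw [LL_apply, LL_apply] at h1
  have h2 : pv (pmk m (2*m) (by omega)) = 2*m := rfl
  rw [h2] at h1
  rw [F_top k (by omega), F_top k' (by omega)] at h1
  omega

lemma matched_filter_eq :
    (Finset.univ.filter (fun ℓ : Pos m ≃ Fin (2*m+2) => IsLinearExtension ℓ)).filter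
        (fun ℓ => Matched ℓ)
      = (Finset.range (m+1)).image (fun k => LLt m k) := by
  ext ℓ
  simp only [Finset.mem_filter, Finset.mem_univ, true_and, Finset.mem_image,
    Finset.mem_range]
  constructor
  · rintro ⟨hext, hM⟩
    obtain ⟨k, hk, rfl⟩ := matched_classify hext hM
    exact ⟨k, by omega, LLt_eq hk⟩
  · rintro ⟨k, hk, rfl⟩
    rw [LLt_eq (by omega : k ≤ m)]
    exact ⟨LL_ext _ _, LL_matched _ _⟩

lemma sum_matched :
    ∑ ℓ ∈ (Finset.univ.filter (fun ℓ : Pos m ≃ Fin (2*m+2) => IsLinearExtension ℓ)).filter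
        (fun ℓ => Matched ℓ),
      ((Equiv.Perm.sign ((lab m).symm.trans ℓ) : ℤˣ) : ℤ) = (m : ℤ) + 1 := by
  rw [matched_filter_eq, Finset.sum_image LLt_inj]
  have hone : ∀ k ∈ Finset.range (m+1),
      ((Equiv.Perm.sign ((lab m).symm.trans (LLt m k)) : ℤˣ) : ℤ) = 1 := by
    intro k hk
    rw [Finset.mem_range] at hk
    rw [LLt_eq (by omega : k ≤ m), sign_lab_LL]
    rfl
  rw [Finset.sum_congr rfl hone]
  simp

lemma signedSum_lab : signedSum (lab m) = (m : ℤ) + 1 := by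
  classical
  unfold signedSum
  rw [← Finset.sum_filter]
  have hB : ∑ ℓ ∈ Finset.univ.filter (fun ℓ : Pos m ≃ Fin (2*m+2) => IsLinearExtension ℓ),
      ((Equiv.Perm.sign ((lab m).symm.trans ℓ) : ℤˣ) : ℤ) = (m : ℤ) + 1 := by
    rw [← Finset.sum_filter_add_sum_filter_not
        (Finset.univ.filter (fun ℓ : Pos m ≃ Fin (2*m+2) => IsLinearExtension ℓ))
        (fun ℓ => Matched ℓ), sum_matched, sum_unmatched_zero, add_zero]
  exact hB

lemma signedSum_natAbs {α : Type} [Fintype α] [PartialOrder α] {n : ℕ}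
    (f g : α ≃ Fin n) : (signedSum f).natAbs = (signedSum g).natAbs := by
  classical
  have hmain : signedSum f
      = ((Equiv.Perm.sign (f.symm.trans g) : ℤˣ) : ℤ) * signedSum g := by
    rw [signedSum, signedSum, Finset.mul_sum]
    apply Finset.sum_congr rfl
    intro ℓ _
    by_cases h : IsLinearExtension ℓ
    · rw [if_pos h, if_pos h]
      have hdecomp : f.symm.trans ℓ = (f.symm.trans g).trans (g.symm.trans ℓ) := by
        apply Equiv.ext; intro x; simp
      have hmul : (f.symm.trans g).trans (g.symm.trans ℓ)
          = (g.symm.trans ℓ) * (f.symm.trans g) := rfl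
      rw [hdecomp, hmul, Equiv.Perm.sign_mul]
      push_cast
      ring
    · rw [if_neg h, if_neg h, mul_zero]
  rw [hmain, Int.natAbs_mul, Int.units_natAbs, one_mul]

lemma card_Pos : Fintype.card (Pos m) = 2*m+2 := by
  have : Fintype.card (Pos m) = Fintype.card (Fin (2*m+2)) := rfl
  rw [this, Fintype.card_fin]

lemma natAbs_eq (n : ℕ) (hn : n = 2*m+2) (f : Pos m ≃ Fin n) :
    (signedSum f).natAbs = m + 1 := by
  subst hn
  rw [signedSum_natAbs f (lab m), signedSum_lab]
  omega

end SignImb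

theorem exists_height2_poset_with_signImbalance (a : ℕ) (ha : 1 ≤ a) :
    ∃ (α : Type) (i1 : Fintype α) (i2 : PartialOrder α),
      @IsHeight2WithSignImbalance a α i1 i2 := by
  obtain ⟨m, rfl⟩ : ∃ m, a = m + 1 := ⟨a - 1, by omega⟩
  refine ⟨SignImb.Pos m, inferInstance, inferInstance, SignImb.height2, ?_⟩
  intro f
  exact SignImb.natAbs_eq _ SignImb.card_Pos f
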